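/- For every integer l ≥ 2 there exists a constant C such that for every properly edge-coloured graph G on n vertices, the number of non-rainbow copies of C_{2l+1} in G is at most C·(n^{2l−1} + R), where R is the number of rainbow copies of C_{2l+1} in G. -/

import Mathlib

open SimpleGraph

/-- A colouring of (potential) edges is proper on `G` if no two distinct edges of `G`
sharing a vertex receive the same colour. -/
def ProperColoring {V γ : Type*} (G : SimpleGraph V) (c : Sym2 V → γ) : Prop :=
  ∀ e f : Sym2 V, e ∈ G.edgeSet → f ∈ G.edgeSet → e ≠ f → (∃ v, v ∈ e ∧ v ∈ f) → c e ≠ c f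

/-- `G` (with colouring `c`) contains a rainbow cycle of length `t`. -/
def HasRainbowCycle {V γ : Type*} (G : SimpleGraph V) (c : Sym2 V → γ) (t : ℕ) : Prop :=
  ∃ (u : V) (w : G.Walk u u), w.IsCycle ∧ w.length = t ∧ (w.edges.map c).Nodup

open Set Function
open Fin.NatCast
open Fin.CommRing
set_option linter.unusedSectionVars false
set_option linter.unusedVariables false
set_option linter.unusedTactic false


section Tools
variable {A : Type*} {B : Type*}

lemma tool_ncard_prod (s : Set A) (t : Set B) : (s ×ˢ t).ncard = s.ncard * t.ncard := by
  have e : ↥(s ×ˢ t) ≃ ↥s × ↥t := Equiv.Set.prod s t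
  rw [← Nat.card_coe_set_eq, ← Nat.card_coe_set_eq, ← Nat.card_coe_set_eq,
    Nat.card_congr e, Nat.card_prod]

lemma tool_inj_card (s : Set A) (f : A → B) [Fintype B] (hf : InjOn f s) :
    s.ncard ≤ Fintype.card B := by
  classical
  have := Set.ncard_le_ncard_of_injOn f (fun a _ => Set.mem_univ (f a)) hf Set.finite_univ
  simpa [Set.ncard_univ, Nat.card_eq_fintype_card] using this

lemma tool_fiber_sum [Finite A] (s : Set A) (f : A → B) [Fintype B] :
    s.ncard = ∑ b : B, (s ∩ f ⁻¹' {b}).ncard := by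
  classical
  have hs : s.Finite := Set.toFinite s
  rw [Set.ncard_eq_toFinset_card s hs]
  rw [Finset.card_eq_sum_card_fiberwise (f := f) (t := Finset.univ) (fun x _ => Finset.mem_univ _)]
  congr 1; funext b
  rw [Set.ncard_eq_toFinset_card _ (Set.toFinite _)]
  congr 1
  ext a
  simp [Set.Finite.mem_toFinset]

lemma tool_fiber_bound [Finite A] (s : Set A) (f : A → B) [Fintype B] (M : ℕ)
    (h : ∀ b, (s ∩ f ⁻¹' {b}).ncard ≤ M) : s.ncard ≤ Fintype.card B * M := by
  rw [tool_fiber_sum s f]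
  calc ∑ b : B, (s ∩ f ⁻¹' {b}).ncard ≤ ∑ _b : B, M := Finset.sum_le_sum (fun b _ => h b)
  _ = Fintype.card B * M := by rw [Finset.sum_const, smul_eq_mul, Finset.card_univ]

lemma tool_sum_fiber_le [Finite A] (T : Set A) (f : A → B) [Fintype B] (t : B → Set A)
    (h : ∀ b, t b ⊆ T ∩ f ⁻¹' {b}) : ∑ b : B, (t b).ncard ≤ T.ncard := by
  rw [tool_fiber_sum T f]
  exact Finset.sum_le_sum (fun b _ => Set.ncard_le_ncard (h b) (Set.toFinite _))

lemma tool_iUnion_le [Finite A] {ι : Type*} [Fintype ι] (f : ι → Set A) :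
    (⋃ i, f i).ncard ≤ ∑ i : ι, (f i).ncard := by
  classical
  have h1 : (⋃ i, f i) = ↑(Finset.univ.biUnion (fun i => (Set.toFinite (f i)).toFinset)) := by
    ext a; simp [Set.Finite.mem_toFinset]
  rw [h1, Set.ncard_coe_finset]
  refine (Finset.card_biUnion_le).trans ?_
  exact Finset.sum_le_sum (fun i _ => by rw [Set.ncard_eq_toFinset_card _ (Set.toFinite _)])

lemma tool_diff_le [Finite A] (s t : Set A) : s.ncard - t.ncard ≤ (s \ t).ncard := by
  have := Set.ncard_le_ncard_diff_add_ncard s t (Set.toFinite t)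
  omega

lemma tool_pair_lower [Finite A] [Finite B] (T : Set A) (H : Set (A × B)) (M : ℕ)
    (h : ∀ a ∈ T, M ≤ {b | (a, b) ∈ H}.ncard) : T.ncard * M ≤ H.ncard := by
  classical
  have key : ∀ a : A, (H ∩ Prod.fst ⁻¹' {a}).ncard = {b | (a, b) ∈ H}.ncard := by
    intro a
    apply le_antisymm
    · exact Set.ncard_le_ncard_of_injOn Prod.snd
        (by rintro ⟨a', b⟩ ⟨hab, rfl⟩; exact hab)
        (by rintro ⟨a1, b1⟩ ⟨h1, rfl⟩ ⟨a2, b2⟩ ⟨h2, rfl⟩ hb; simp_all) (Set.toFinite _)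
    · exact Set.ncard_le_ncard_of_injOn (fun b => (a, b))
        (by intro b hb; exact ⟨hb, rfl⟩)
        (by intro b1 _ b2 _ he; simpa using he) (Set.toFinite _)
  have hfin : Finite (A × B) := inferInstance
  have : Fintype A := Fintype.ofFinite A
  rw [tool_fiber_sum H Prod.fst]
  have hTf : T.ncard * M = ∑ a ∈ (Set.toFinite T).toFinset, M := by
    rw [Finset.sum_const, smul_eq_mul, Set.ncard_eq_toFinset_card T (Set.toFinite T)]
  rw [hTf]
  calc ∑ a ∈ (Set.toFinite T).toFinset, M ≤ ∑ a ∈ (Set.toFinite T).toFinset, (H ∩ Prod.fst ⁻¹' {a}).ncard := by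
        refine Finset.sum_le_sum (fun a ha => ?_)
        rw [key a]; exact h a ((Set.Finite.mem_toFinset _).1 ha)
  _ ≤ ∑ a : A, (H ∩ Prod.fst ⁻¹' {a}).ncard :=
        Finset.sum_le_sum_of_subset (Finset.subset_univ _)

end Tools


section Defs
variable {V : Type} [Fintype V] {γT : Type} (G : SimpleGraph V) (c : Sym2 V → γT)

/-- colour of the `i`-th edge of a tuple -/
def Ec {N : ℕ} [NeZero N] (f : Fin N → V) (i : ℕ) : γT := c s(f i, f (i+1))

def PathS (m : ℕ) (w u : V) : Set (Fin (m+1) → V) :=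
  {q | Injective q ∧ (∀ i : ℕ, i < m → G.Adj (q i) (q (i+1))) ∧ q 0 = w ∧ q (m : Fin (m+1)) = u}

lemma proper_unique (hc : ProperColoring G c) {v w1 w2 : V}
    (h1 : G.Adj v w1) (h2 : G.Adj v w2) (hcol : c s(v, w1) = c s(v, w2)) : w1 = w2 := by
  by_contra hne
  have hne2 : s(v, w1) ≠ s(v, w2) := by
    intro h
    rw [Sym2.eq_iff] at h
    rcases h with ⟨-, h2'⟩ | ⟨h3, h4⟩
    · exact hne h2'
    · rw [h4] at h1; exact G.irrefl h1
  exact hc _ _ h1 h2 hne2 ⟨v, by simp, by simp⟩ hcol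

lemma fin_cast_inj {N : ℕ} [NeZero N] {i j : ℕ} (hi : i < N) (hj : j < N)
    (h : (i : Fin N) = (j : Fin N)) : i = j := by
  have := congrArg Fin.val h
  rwa [Fin.val_natCast, Fin.val_natCast, Nat.mod_eq_of_lt hi, Nat.mod_eq_of_lt hj] at this

lemma fun_ext_nat {m : ℕ} {q q' : Fin (m+1) → V} (h : ∀ j : ℕ, j ≤ m → q j = q' j) : q = q' := by
  funext jj
  have := h jj.val (Nat.lt_succ_iff.mp jj.isLt)
  rwa [Fin.cast_val_eq_self] at this

lemma path_count (m : ℕ) (hm : 1 ≤ m) (w u : V) :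
    (PathS G m w u).ncard ≤ (Fintype.card V) ^ (m - 1) := by
  classical
  have := tool_inj_card (PathS G m w u)
    (fun q => (fun i : Fin (m-1) => q ((((i : ℕ) + 1 : ℕ)) : Fin (m+1))))
  refine le_trans (this ?_) (le_of_eq ?_)
  · intro q hq q' hq' he
    apply fun_ext_nat
    intro j hj
    rcases Nat.eq_zero_or_pos j with rfl | hj0
    · rw [show ((0:ℕ) : Fin (m+1)) = 0 by simp, hq.2.2.1, hq'.2.2.1]
    rcases eq_or_lt_of_le hj with rfl | hjm
    · rw [hq.2.2.2, hq'.2.2.2]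
    · have hj1 : j - 1 < m - 1 := by omega
      have := congrFun he ⟨j - 1, hj1⟩
      dsimp only at this
      rwa [show j - 1 + 1 = j by omega] at this
  · simp [Fintype.card_fun]

/-- Generic: if each member of `s` is recoverable from its coordinates off `r`,
then `s.ncard ≤ n^(m-2)`. -/
lemma drop_count (m : ℕ) (hm : 2 ≤ m) (w u : V) (s : Set (Fin (m+1) → V))
    (hsub : s ⊆ PathS G m w u) (r : ℕ) (hr1 : 1 ≤ r) (hr2 : r ≤ m - 1)
    (key : ∀ q ∈ s, ∀ q' ∈ s, (∀ j : ℕ, j ≤ m → j ≠ r → q j = q' j) →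
      q (r : Fin (m+1)) = q' (r : Fin (m+1))) :
    s.ncard ≤ (Fintype.card V) ^ (m - 2) := by
  classical
  set idx : Fin (m-2) → ℕ := fun i => if (i : ℕ) + 1 < r then (i : ℕ) + 1 else (i : ℕ) + 2 with hidx
  have := tool_inj_card s (fun q => (fun i : Fin (m-2) => q (idx i)))
  refine le_trans (this ?_) (le_of_eq (by simp [Fintype.card_fun]))
  intro q hq q' hq' he
  have hoff : ∀ j : ℕ, j ≤ m → j ≠ r → q j = q' j := by
    intro j hj hjr
    rcases Nat.eq_zero_or_pos j with rfl | hj0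
    · rw [show ((0:ℕ) : Fin (m+1)) = 0 by simp, (hsub hq).2.2.1, (hsub hq').2.2.1]
    rcases eq_or_lt_of_le hj with rfl | hjm
    · rw [(hsub hq).2.2.2, (hsub hq').2.2.2]
    · have hcase : (j < r ∧ j - 1 < m - 2) ∨ (r < j ∧ j - 2 < m - 2) := by omega
      rcases hcase with ⟨hlt, hi⟩ | ⟨hgt, hi⟩
      · have := congrFun he ⟨j - 1, hi⟩
        dsimp only at this
        have hx : idx ⟨j-1, hi⟩ = j := by
          show (if _ then _ else _) = j
          rw [if_pos (show (⟨j-1,hi⟩ : Fin (m-2)).val + 1 < r by simp; omega)]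
          simp; omega
        rwa [hx] at this
      · have := congrFun he ⟨j - 2, hi⟩
        dsimp only at this
        have hx : idx ⟨j-2, hi⟩ = j := by
          show (if _ then _ else _) = j
          rw [if_neg (show ¬((⟨j-2,hi⟩ : Fin (m-2)).val + 1 < r) by simp; omega)]
          simp; omega
        rwa [hx] at this
  apply fun_ext_nat
  intro j hj
  rcases eq_or_ne j r with rfl | hjr
  · exact key q hq q' hq' hoff
  · exact hoff j hj hjr

end Defs
section Bad
variable {V : Type} [Fintype V] {γT : Type} (G : SimpleGraph V) (c : Sym2 V → γT)

lemma cast_succ_eq {N : ℕ} [NeZero N] (i : ℕ) : ((i+1 : ℕ) : Fin N) = (i : Fin N) + 1 := by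
  push_cast; rfl

lemma Ec_def {N : ℕ} [NeZero N] (f : Fin N → V) (i : ℕ) :
    Ec c f i = c s(f (i : Fin N), f ((i : Fin N) + 1)) := rfl

lemma path_last {m : ℕ} {w u : V} {q : Fin (m+1) → V} (hq : q ∈ PathS G m w u)
    {i : ℕ} (he : i + 1 = m) : q ((i : Fin (m+1)) + 1) = u := by
  rw [← cast_succ_eq, he]; exact hq.2.2.2

lemma path_adj {m : ℕ} {w u : V} {q : Fin (m+1) → V} (hq : q ∈ PathS G m w u)
    {i : ℕ} (hi : i < m) : G.Adj (q (i : Fin (m+1))) (q ((i : Fin (m+1)) + 1)) := hq.2.1 i hi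

/-- paths whose `i`-th vertex is `z` (internal positions only) -/
def bad1 (m : ℕ) (w u : V) (i : ℕ) (z : V) : Set (Fin (m+1) → V) :=
  {q ∈ PathS G m w u | 1 ≤ i ∧ i ≤ m - 1 ∧ q i = z}

/-- paths whose `i`-th edge has colour `δ` -/
def bad2 (m : ℕ) (w u : V) (i : ℕ) (δ : γT) : Set (Fin (m+1) → V) :=
  {q ∈ PathS G m w u | i < m ∧ Ec c q i = δ}

/-- paths with two edges of equal colour -/
def bad3 (m : ℕ) (w u : V) (i j : ℕ) : Set (Fin (m+1) → V) :=
  {q ∈ PathS G m w u | i < j ∧ j < m ∧ Ec c q i = Ec c q j}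

lemma bad1_count {m : ℕ} (hm : 2 ≤ m) (w u : V) (i : ℕ) (z : V) :
    (bad1 G m w u i z).ncard ≤ (Fintype.card V) ^ (m - 2) := by
  by_cases hi : 1 ≤ i ∧ i ≤ m - 1
  · refine drop_count G m hm w u _ (fun q hq => hq.1) i hi.1 hi.2 ?_
    intro q hq q' hq' _
    rw [hq.2.2.2, hq'.2.2.2]
  · have : bad1 G m w u i z = ∅ := by
      ext q; simp only [bad1, Set.mem_setOf_eq, Set.mem_empty_iff_false, iff_false]
      rintro ⟨-, h1, h2, -⟩; exact hi ⟨h1, h2⟩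
    simp [this]

lemma bad2_count {m : ℕ} (hm : 2 ≤ m) (w u : V) (hc : ProperColoring G c) (i : ℕ) (δ : γT) :
    (bad2 G c m w u i δ).ncard ≤ (Fintype.card V) ^ (m - 2) := by
  by_cases hi : i < m
  · rcases eq_or_lt_of_le (Nat.succ_le_of_lt hi) with he | hlt
    · -- i + 1 = m : drop q i, anchored at u
      refine drop_count G m hm w u _ (fun q hq => hq.1) i (by omega) (by omega) ?_
      intro q hq q' hq' hoff
      obtain ⟨hqP, -, hcol⟩ := hq
      obtain ⟨hq'P, -, hcol'⟩ := hq'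
      have l1 : q ((i : Fin (m+1)) + 1) = u := path_last G hqP he
      have l2 : q' ((i : Fin (m+1)) + 1) = u := path_last G hq'P he
      have hadj : G.Adj u (q i) := by have := path_adj G hqP hi; rw [l1] at this; exact this.symm
      have hadj' : G.Adj u (q' i) := by have := path_adj G hq'P hi; rw [l2] at this; exact this.symm
      refine proper_unique G c hc hadj hadj' ?_
      have e1 : c s(u, q (i : Fin (m+1))) = δ := by rw [← l1, Sym2.eq_swap]; exact hcol
      have e2 : c s(u, q' (i : Fin (m+1))) = δ := by rw [← l2, Sym2.eq_swap]; exact hcol'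
      rw [e1, e2]
    · -- i + 1 < m : drop q (i+1), anchored at q i
      refine drop_count G m hm w u _ (fun q hq => hq.1) (i+1) (by omega) (by omega) ?_
      intro q hq q' hq' hoff
      obtain ⟨hqP, -, hcol⟩ := hq
      obtain ⟨hq'P, -, hcol'⟩ := hq'
      have hqi : q (i : Fin (m+1)) = q' (i : Fin (m+1)) := hoff i (by omega) (by omega)
      rw [cast_succ_eq]
      have hadj : G.Adj (q i) (q ((i : Fin (m+1)) + 1)) := path_adj G hqP hi
      have hadj' : G.Adj (q i) (q' ((i : Fin (m+1)) + 1)) := by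
        rw [hqi]; exact path_adj G hq'P hi
      refine proper_unique G c hc hadj hadj' ?_
      conv_rhs => rw [hqi]
      exact hcol.trans hcol'.symm
  · have : bad2 G c m w u i δ = ∅ := by
      ext q; simp only [bad2, Set.mem_setOf_eq, Set.mem_empty_iff_false, iff_false]
      rintro ⟨-, h1, -⟩; exact hi h1
    simp [this]

lemma bad3_count {m : ℕ} (hm : 2 ≤ m) (w u : V) (hc : ProperColoring G c) (i j : ℕ) :
    (bad3 G c m w u i j).ncard ≤ (Fintype.card V) ^ (m - 2) := by
  by_cases hij : i < j ∧ j < m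
  · obtain ⟨hij1, hjm⟩ := hij
    rcases eq_or_lt_of_le (Nat.succ_le_of_lt hjm) with he | hlt
    · rcases eq_or_lt_of_le (Nat.succ_le_of_lt hij1) with he2 | hlt2
      · -- i + 1 = j : empty by properness
        have : bad3 G c m w u i j = ∅ := by
          ext q
          simp only [bad3, Set.mem_setOf_eq, Set.mem_empty_iff_false, iff_false]
          rintro ⟨hqP, -, -, hcc⟩
          have h1 := path_adj G hqP (show i < m by omega)
          have h2 := path_adj G hqP hjm
          have hij' : ((i : Fin (m+1)) + 1) = ((j : ℕ) : Fin (m+1)) := by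
            rw [← cast_succ_eq, show i + 1 = j from he2]
          have hne : s(q (i : Fin (m+1)), q ((i : Fin (m+1)) + 1))
              ≠ s(q (j : Fin (m+1)), q ((j : Fin (m+1)) + 1)) := by
            rw [← cast_succ_eq, ← cast_succ_eq]
            intro hEq
            rw [Sym2.eq_iff] at hEq
            rcases hEq with ⟨h3, -⟩ | ⟨h3, -⟩
            · have := fin_cast_inj (show i < m+1 by omega) (show j < m+1 by omega) (hqP.1 h3)
              omega
            · have := fin_cast_inj (show i < m+1 by omega) (show j+1 < m+1 by omega) (hqP.1 h3)
              omega
          refine hc _ _ h1 h2 hne ⟨q ((i : Fin (m+1)) + 1), by simp, ?_⟩ hcc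
          rw [hij']; simp
        simp [this]
      · -- i + 1 < j, j+1 = m : drop q j, colour from edge i, anchor u
        refine drop_count G m hm w u _ (fun q hq => hq.1) j (by omega) (by omega) ?_
        intro q hq q' hq' hoff
        obtain ⟨hqP, -, -, hcc⟩ := hq
        obtain ⟨hq'P, -, -, hcc'⟩ := hq'
        have hi1 : q (i : Fin (m+1)) = q' (i : Fin (m+1)) := hoff i (by omega) (by omega)
        have hi2 : q ((i : Fin (m+1)) + 1) = q' ((i : Fin (m+1)) + 1) := by
          rw [← cast_succ_eq]; exact hoff (i+1) (by omega) (by omega)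
        have l1 : q ((j : Fin (m+1)) + 1) = u := path_last G hqP he
        have l2 : q' ((j : Fin (m+1)) + 1) = u := path_last G hq'P he
        have hadj : G.Adj u (q j) := by have := path_adj G hqP hjm; rw [l1] at this; exact this.symm
        have hadj' : G.Adj u (q' j) := by have := path_adj G hq'P hjm; rw [l2] at this; exact this.symm
        refine proper_unique G c hc hadj hadj' ?_
        have e1 : c s(u, q (j : Fin (m+1))) = Ec c q i := by
          rw [← l1, Sym2.eq_swap]; exact hcc.symm
        have e2 : c s(u, q' (j : Fin (m+1))) = Ec c q' i := by
          rw [← l2, Sym2.eq_swap]; exact hcc'.symm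
        rw [e1, e2, Ec_def, Ec_def, hi1, hi2]
    · -- j + 1 < m : drop q (j+1), colour from edge i, anchor q j
      refine drop_count G m hm w u _ (fun q hq => hq.1) (j+1) (by omega) (by omega) ?_
      intro q hq q' hq' hoff
      obtain ⟨hqP, -, -, hcc⟩ := hq
      obtain ⟨hq'P, -, -, hcc'⟩ := hq'
      have hi1 : q (i : Fin (m+1)) = q' (i : Fin (m+1)) := hoff i (by omega) (by omega)
      have hi2 : q ((i : Fin (m+1)) + 1) = q' ((i : Fin (m+1)) + 1) := by
        rw [← cast_succ_eq]; exact hoff (i+1) (by omega) (by omega)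
      have hj0 : q (j : Fin (m+1)) = q' (j : Fin (m+1)) := hoff j (by omega) (by omega)
      rw [cast_succ_eq]
      have hadj : G.Adj (q j) (q ((j : Fin (m+1)) + 1)) := path_adj G hqP hjm
      have hadj' : G.Adj (q j) (q' ((j : Fin (m+1)) + 1)) := by
        rw [hj0]; exact path_adj G hq'P hjm
      refine proper_unique G c hc hadj hadj' ?_
      conv_rhs => rw [hj0]
      have g1 : c s(q (j : Fin (m+1)), q ((j : Fin (m+1)) + 1)) = Ec c q i := hcc.symm
      have g2 : c s(q' (j : Fin (m+1)), q' ((j : Fin (m+1)) + 1)) = Ec c q' i := hcc'.symm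
      rw [g1, g2, Ec_def, Ec_def, hi1, hi2]
  · have : bad3 G c m w u i j = ∅ := by
      ext q; simp only [bad3, Set.mem_setOf_eq, Set.mem_empty_iff_false, iff_false]
      rintro ⟨-, h1, h2, -⟩; exact hij ⟨h1, h2⟩
    simp [this]

end Bad
section Compat
variable {V : Type} [Fintype V] {γT : Type} (G : SimpleGraph V) (c : Sym2 V → γT)

lemma mk_cast {N : ℕ} [NeZero N] (j : ℕ) (h : j < N) : (⟨j, h⟩ : Fin N) = (j : Fin N) := by
  ext; rw [Fin.val_natCast, Nat.mod_eq_of_lt h]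

/-- rainbow paths of length `d` from `u` to `w` -/
def RbP (d : ℕ) (u w : V) : Set (Fin (d+1) → V) :=
  {p ∈ PathS G d u w | ∀ i j : ℕ, i < j → j < d → Ec c p i ≠ Ec c p j}

/-- `q` is a compatible closing path for `p` -/
def Compat (d m : ℕ) (p : Fin (d+1) → V) (q : Fin (m+1) → V) : Prop :=
  (∀ i : ℕ, 1 ≤ i → i ≤ m - 1 → ∀ j : ℕ, j ≤ d → q i ≠ p j)
  ∧ (∀ i : ℕ, i < m → ∀ j : ℕ, j < d → Ec c q i ≠ Ec c p j)
  ∧ (∀ i j : ℕ, i < j → j < m → Ec c q i ≠ Ec c q j)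

lemma compat_lower {d m : ℕ} (hm : 2 ≤ m) (w u : V) (hc : ProperColoring G c)
    (p : Fin (d+1) → V) :
    (PathS G m w u).ncard - ((m+1)*(d+1) + m*d + m*m) * (Fintype.card V)^(m-2)
      ≤ {q ∈ PathS G m w u | Compat c d m p q}.ncard := by
  classical
  set n := Fintype.card V
  set U1 : Set (Fin (m+1) → V) := ⋃ z : Fin (m+1) × Fin (d+1), bad1 G m w u z.1.val (p z.2)
  set U2 : Set (Fin (m+1) → V) := ⋃ z : Fin m × Fin d, bad2 G c m w u z.1.val (Ec c p z.2.val)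
  set U3 : Set (Fin (m+1) → V) := ⋃ z : Fin m × Fin m, bad3 G c m w u z.1.val z.2.val
  have hcover : PathS G m w u \ (U1 ∪ U2 ∪ U3) ⊆ {q ∈ PathS G m w u | Compat c d m p q} := by
    rintro q ⟨hq, hbad⟩
    refine ⟨hq, ?_, ?_, ?_⟩
    · intro i h1 h2 j hj heq
      have hmem : q ∈ U1 := by
        refine Set.mem_iUnion.mpr ⟨(⟨i, by omega⟩, ⟨j, by omega⟩), hq, h1, h2, ?_⟩
        show q ((i : ℕ) : Fin (m+1)) = p (⟨j, by omega⟩ : Fin (d+1))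
        rw [mk_cast j (by omega)]
        exact heq
      exact absurd (Or.inl (Or.inl hmem)) hbad
    · intro i hi j hj heq
      have hmem : q ∈ U2 := by
        refine Set.mem_iUnion.mpr ⟨(⟨i, by omega⟩, ⟨j, by omega⟩), hq, hi, ?_⟩
        show Ec c q i = Ec c p ((⟨j, by omega⟩ : Fin d) : ℕ)
        exact heq
      exact absurd (Or.inl (Or.inr hmem)) hbad
    · intro i j hij hj heq
      have hmem : q ∈ U3 := by
        exact Set.mem_iUnion.mpr ⟨(⟨i, by omega⟩, ⟨j, by omega⟩), hq, hij, hj, heq⟩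
      exact absurd (Or.inr hmem) hbad
  have hU1 : U1.ncard ≤ (m+1)*(d+1) * n^(m-2) := by
    refine (tool_iUnion_le _).trans ?_
    calc ∑ z : Fin (m+1) × Fin (d+1), (bad1 G m w u z.1.val (p z.2)).ncard
        ≤ ∑ _z : Fin (m+1) × Fin (d+1), n^(m-2) :=
          Finset.sum_le_sum (fun z _ => bad1_count G hm w u z.1.val (p z.2))
      _ = (m+1)*(d+1) * n^(m-2) := by
          rw [Finset.sum_const, smul_eq_mul, Finset.card_univ, Fintype.card_prod,
            Fintype.card_fin, Fintype.card_fin]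
  have hU2 : U2.ncard ≤ m*d * n^(m-2) := by
    refine (tool_iUnion_le _).trans ?_
    calc ∑ z : Fin m × Fin d, (bad2 G c m w u z.1.val (Ec c p z.2.val)).ncard
        ≤ ∑ _z : Fin m × Fin d, n^(m-2) :=
          Finset.sum_le_sum (fun z _ => bad2_count G c hm w u hc z.1.val _)
      _ = m*d * n^(m-2) := by
          rw [Finset.sum_const, smul_eq_mul, Finset.card_univ, Fintype.card_prod,
            Fintype.card_fin, Fintype.card_fin]
  have hU3 : U3.ncard ≤ m*m * n^(m-2) := by
    refine (tool_iUnion_le _).trans ?_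
    calc ∑ z : Fin m × Fin m, (bad3 G c m w u z.1.val z.2.val).ncard
        ≤ ∑ _z : Fin m × Fin m, n^(m-2) :=
          Finset.sum_le_sum (fun z _ => bad3_count G c hm w u hc z.1.val z.2.val)
      _ = m*m * n^(m-2) := by
          rw [Finset.sum_const, smul_eq_mul, Finset.card_univ, Fintype.card_prod,
            Fintype.card_fin]
  have hUle : (U1 ∪ U2 ∪ U3).ncard ≤ ((m+1)*(d+1) + m*d + m*m) * n^(m-2) := by
    refine (Set.ncard_union_le _ _).trans ?_
    refine le_trans (add_le_add_left (Set.ncard_union_le _ _) _) ?_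
    calc U1.ncard + U2.ncard + U3.ncard ≤ (m+1)*(d+1)*n^(m-2) + m*d*n^(m-2) + m*m*n^(m-2) := by
          exact add_le_add (add_le_add hU1 hU2) hU3
      _ = ((m+1)*(d+1) + m*d + m*m) * n^(m-2) := by ring
  have := tool_diff_le (PathS G m w u) (U1 ∪ U2 ∪ U3)
  have hmono := Set.ncard_le_ncard hcover (Set.toFinite _)
  omega

end Compat
section Phi
variable {V : Type} [Fintype V] {γT : Type} (G : SimpleGraph V) (c : Sym2 V → γT)

/-- cyclic tuples: injective and cyclically adjacent -/
def Cyc (N : ℕ) [NeZero N] : Set (Fin N → V) :=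
  {y | Function.Injective y ∧ ∀ i : Fin N, G.Adj (y i) (y (i + 1))}

/-- rainbow cyclic tuples -/
def RbCyc (N : ℕ) [NeZero N] : Set (Fin N → V) :=
  {y ∈ Cyc G N | Function.Injective (fun i : Fin N => c s(y i, y (i + 1)))}

def Phi (d m : ℕ) (p : Fin (d+1) → V) (q : Fin (m+1) → V) : Fin (d+m) → V :=
  fun j => if h : j.val ≤ d then p ⟨j.val, Nat.lt_succ_of_le h⟩
           else q ⟨j.val - d, by have := j.isLt; omega⟩

lemma Phi_p {d m : ℕ} (hm : 1 ≤ m) (p : Fin (d+1) → V) (q : Fin (m+1) → V)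
    {J : ℕ} (hJd : J ≤ d) :
    haveI : NeZero (d+m) := ⟨by omega⟩
    Phi d m p q (J : Fin (d+m)) = p (J : Fin (d+1)) := by
  haveI : NeZero (d+m) := ⟨by omega⟩
  have hv : ((J : Fin (d+m))).val = J := by
    rw [Fin.val_natCast]; exact Nat.mod_eq_of_lt (by omega)
  unfold Phi
  rw [dif_pos (show ((J : Fin (d+m))).val ≤ d by rw [hv]; exact hJd)]
  congr 1
  ext
  rw [hv, Fin.val_natCast, Nat.mod_eq_of_lt (by omega)]

lemma Phi_q {d m : ℕ} (hm : 1 ≤ m) (hd : 1 ≤ d) (p : Fin (d+1) → V) (q : Fin (m+1) → V)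
    (hglue1 : p (d : Fin (d+1)) = q 0) (hglue2 : q (m : Fin (m+1)) = p 0)
    {J : ℕ} (hdJ : d ≤ J) (hJ : J ≤ d + m) :
    haveI : NeZero (d+m) := ⟨by omega⟩
    Phi d m p q (J : Fin (d+m)) = q ((J - d : ℕ) : Fin (m+1)) := by
  haveI : NeZero (d+m) := ⟨by omega⟩
  rcases eq_or_lt_of_le hJ with rfl | hJlt
  · have hv : (((d+m : ℕ) : Fin (d+m))).val = 0 := by
      rw [Fin.val_natCast]; simp
    unfold Phi
    rw [dif_pos (show (((d+m:ℕ) : Fin (d+m))).val ≤ d by rw [hv]; omega)]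
    have h0 : (⟨(((d+m:ℕ) : Fin (d+m))).val, Nat.lt_succ_of_le (by rw [hv]; omega)⟩ : Fin (d+1)) = 0 := by
      ext; rw [hv]; rfl
    rw [h0, show d + m - d = m by omega]
    exact hglue2.symm
  · have hv : ((J : Fin (d+m))).val = J := by
      rw [Fin.val_natCast]; exact Nat.mod_eq_of_lt (by omega)
    rcases eq_or_lt_of_le hdJ with rfl | hdJlt
    · unfold Phi
      rw [dif_pos (show ((d : Fin (d+m))).val ≤ d by rw [hv])]
      have h0 : (⟨((d : Fin (d+m))).val, Nat.lt_succ_of_le (by rw [hv])⟩ : Fin (d+1)) = (d : Fin (d+1)) := by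
        ext; rw [hv, Fin.val_natCast, Nat.mod_eq_of_lt (by omega)]
      rw [h0, hglue1, show d - d = 0 by omega, Nat.cast_zero]
    · unfold Phi
      rw [dif_neg (show ¬(((J : Fin (d+m))).val ≤ d) by rw [hv]; omega)]
      congr 1
      ext
      simp only [hv]
      rw [Fin.val_natCast, Nat.mod_eq_of_lt (by omega)]

lemma rainbow_lower {d m : ℕ} (hd : 2 ≤ d) (hm : 2 ≤ m) (u w : V) (hc : ProperColoring G c) :
    haveI : NeZero (d+m) := ⟨by omega⟩
    (RbP G c d u w).ncard *
      ((PathS G m w u).ncard - ((m+1)*(d+1) + m*d + m*m) * (Fintype.card V)^(m-2))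
      ≤ {y ∈ RbCyc G c (d+m) | y 0 = u ∧ y (d : Fin (d+m)) = w}.ncard := by
  classical
  haveI : NeZero (d+m) := ⟨by omega⟩
  set H : Set ((Fin (d+1) → V) × (Fin (m+1) → V)) :=
    {pq | pq.1 ∈ RbP G c d u w ∧ pq.2 ∈ PathS G m w u ∧ Compat c d m pq.1 pq.2} with hH
  have step1 : (RbP G c d u w).ncard *
      ((PathS G m w u).ncard - ((m+1)*(d+1) + m*d + m*m) * (Fintype.card V)^(m-2)) ≤ H.ncard := by
    refine tool_pair_lower _ _ _ ?_
    intro p hp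
    have := compat_lower G c hm w u hc p
    refine le_trans this (le_of_eq ?_)
    congr 1
    ext q
    simp only [Set.mem_setOf_eq, hH]
    tauto
  refine le_trans step1 ?_
  refine Set.ncard_le_ncard_of_injOn (fun pq => Phi d m pq.1 pq.2) ?_ ?_ (Set.toFinite _)
  · -- maps to rainbow fiber
    rintro ⟨p, q⟩ ⟨hpR, hqP, C1, C2, C3⟩
    dsimp only at hpR hqP C1 C2 C3
    obtain ⟨hpP, hpRb⟩ := hpR
    set y := Phi d m p q with hy
    have hglue1 : p (d : Fin (d+1)) = q 0 := by rw [hpP.2.2.2, hqP.2.2.1]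
    have hglue2 : q (m : Fin (m+1)) = p 0 := by rw [hqP.2.2.2, hpP.2.2.1]
    have hYp : ∀ J : ℕ, J ≤ d → y (J : Fin (d+m)) = p (J : Fin (d+1)) :=
      fun J hJ => Phi_p (by omega) p q hJ
    have hYq : ∀ J : ℕ, d ≤ J → J ≤ d + m → y (J : Fin (d+m)) = q ((J - d : ℕ) : Fin (m+1)) :=
      fun J h1 h2 => Phi_q (by omega) (by omega) p q hglue1 hglue2 h1 h2
    -- adjacency of consecutive entries
    have hAdj : ∀ J : ℕ, J < d + m → G.Adj (y (J : Fin (d+m))) (y ((J+1 : ℕ) : Fin (d+m))) := by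
      intro J hJ
      by_cases hJd : J + 1 ≤ d
      · rw [hYp J (by omega), hYp (J+1) hJd, cast_succ_eq]
        exact path_adj G hpP (by omega)
      · have hdJ : d ≤ J := by omega
        rw [hYq (J+1) (by omega) (by omega), hYq J hdJ (by omega)]
        have := path_adj G hqP (show J - d < m by omega)
        rwa [← cast_succ_eq, show J - d + 1 = J + 1 - d by omega] at this
    -- edge colours
    have hColp : ∀ J : ℕ, J < d →
        c s(y (J : Fin (d+m)), y ((J+1 : ℕ) : Fin (d+m))) = Ec c p J := by
      intro J hJ
      rw [hYp J (by omega), hYp (J+1) (by omega), Ec_def, cast_succ_eq]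
    have hColq : ∀ J : ℕ, d ≤ J → J < d + m →
        c s(y (J : Fin (d+m)), y ((J+1 : ℕ) : Fin (d+m))) = Ec c q (J - d) := by
      intro J h1 h2
      rw [hYq J h1 (by omega), hYq (J+1) (by omega) (by omega),
        show J + 1 - d = (J - d) + 1 by omega, Ec_def, cast_succ_eq]
    refine ⟨⟨⟨?_, ?_⟩, ?_⟩, ?_, ?_⟩
    · -- injective
      show Function.Injective y
      intro i1 i2 hEq
      have e1 : i1 = ((i1.val : ℕ) : Fin (d+m)) := (Fin.cast_val_eq_self i1).symm
      have e2 : i2 = ((i2.val : ℕ) : Fin (d+m)) := (Fin.cast_val_eq_self i2).symm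
      rw [e1, e2] at hEq ⊢
      set J1 := i1.val; set J2 := i2.val
      have hJ1 : J1 < d + m := i1.isLt
      have hJ2 : J2 < d + m := i2.isLt
      by_cases h1 : J1 ≤ d <;> by_cases h2 : J2 ≤ d
      · rw [hYp J1 h1, hYp J2 h2] at hEq
        have := fin_cast_inj (by omega) (by omega) (hpP.1 hEq)
        rw [this]
      · rw [hYp J1 h1, hYq J2 (by omega) (by omega)] at hEq
        exact absurd hEq.symm (C1 (J2 - d) (by omega) (by omega) J1 h1)
      · rw [hYq J1 (by omega) (by omega), hYp J2 h2] at hEq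
        exact absurd hEq (C1 (J1 - d) (by omega) (by omega) J2 h2)
      · rw [hYq J1 (by omega) (by omega), hYq J2 (by omega) (by omega)] at hEq
        have hsub := fin_cast_inj (show J1 - d < m+1 by omega) (show J2 - d < m+1 by omega)
          (hqP.1 hEq)
        have : J1 = J2 := by omega
        rw [this]
    · -- adjacency
      show ∀ i : Fin (d+m), G.Adj (y i) (y (i+1))
      intro i
      have e1 : i = ((i.val : ℕ) : Fin (d+m)) := (Fin.cast_val_eq_self i).symm
      have := hAdj i.val i.isLt
      rwa [cast_succ_eq, ← e1] at this
    · -- rainbow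
      show Function.Injective (fun i : Fin (d+m) => c s(y i, y (i+1)))
      intro i1 i2 hEq
      simp only at hEq
      have e1 : i1 = ((i1.val : ℕ) : Fin (d+m)) := (Fin.cast_val_eq_self i1).symm
      have e2 : i2 = ((i2.val : ℕ) : Fin (d+m)) := (Fin.cast_val_eq_self i2).symm
      rw [e1, e2] at hEq ⊢
      rw [show ((i1.val : ℕ) : Fin (d+m)) + 1 = ((i1.val + 1 : ℕ) : Fin (d+m)) by
        rw [cast_succ_eq], show ((i2.val : ℕ) : Fin (d+m)) + 1 = ((i2.val + 1 : ℕ) : Fin (d+m)) by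
        rw [cast_succ_eq]] at hEq
      set J1 := i1.val; set J2 := i2.val
      have hJ1 : J1 < d + m := i1.isLt
      have hJ2 : J2 < d + m := i2.isLt
      by_cases h1 : J1 < d <;> by_cases h2 : J2 < d
      · rw [hColp J1 h1, hColp J2 h2] at hEq
        rcases lt_trichotomy J1 J2 with h | h | h
        · exact absurd hEq (hpRb J1 J2 h h2)
        · rw [h]
        · exact absurd hEq.symm (hpRb J2 J1 h h1)
      · rw [hColp J1 h1, hColq J2 (by omega) (by omega)] at hEq
        exact absurd hEq.symm (C2 (J2 - d) (by omega) J1 h1)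
      · rw [hColq J1 (by omega) (by omega), hColp J2 h2] at hEq
        exact absurd hEq (C2 (J1 - d) (by omega) J2 h2)
      · rw [hColq J1 (by omega) (by omega), hColq J2 (by omega) (by omega)] at hEq
        rcases lt_trichotomy (J1 - d) (J2 - d) with h | h | h
        · exact absurd hEq (C3 (J1 - d) (J2 - d) h (by omega))
        · have : J1 = J2 := by omega
          rw [this]
        · exact absurd hEq.symm (C3 (J2 - d) (J1 - d) h (by omega))
    · -- y 0 = u
      show y 0 = u
      have := hYp 0 (by omega)
      rw [show ((0 : ℕ) : Fin (d+m)) = 0 by simp, show ((0 : ℕ) : Fin (d+1)) = 0 by simp] at this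
      rw [this, hpP.2.2.1]
    · -- y d = w
      show y (d : Fin (d+m)) = w
      have := hYp d (le_refl d)
      rw [this, hpP.2.2.2]
  · -- injective on H
    rintro ⟨p, q⟩ ⟨hpR, hqP, -⟩ ⟨p', q'⟩ ⟨hp'R, hq'P, -⟩ hEq
    dsimp only at hpR hqP hp'R hq'P hEq
    obtain ⟨hpP, -⟩ := hpR
    obtain ⟨hp'P, -⟩ := hp'R
    have hglue1 : p (d : Fin (d+1)) = q 0 := by rw [hpP.2.2.2, hqP.2.2.1]
    have hglue2 : q (m : Fin (m+1)) = p 0 := by rw [hqP.2.2.2, hpP.2.2.1]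
    have hglue1' : p' (d : Fin (d+1)) = q' 0 := by rw [hp'P.2.2.2, hq'P.2.2.1]
    have hglue2' : q' (m : Fin (m+1)) = p' 0 := by rw [hq'P.2.2.2, hp'P.2.2.1]
    have hyy : ∀ J : ℕ, Phi d m p q (J : Fin (d+m)) = Phi d m p' q' (J : Fin (d+m)) :=
      fun J => congrFun hEq _
    have hp_eq : p = p' := by
      apply fun_ext_nat
      intro j hj
      have := hyy j
      rwa [Phi_p (by omega) p q hj, Phi_p (by omega) p' q' hj] at this
    have hq_eq : q = q' := by
      apply fun_ext_nat
      intro j hj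
      have := hyy (d + j)
      rw [Phi_q (by omega) (by omega) p q hglue1 hglue2 (by omega) (by omega),
        Phi_q (by omega) (by omega) p' q' hglue1' hglue2' (by omega) (by omega),
        show d + j - d = j by omega] at this
      exact this
    rw [Prod.ext_iff]
    exact ⟨hp_eq, hq_eq⟩

end Phi
section MainA
variable {V : Type} [Fintype V] {γT : Type} (G : SimpleGraph V) (c : Sym2 V → γT)

lemma val_cast_big {k a : ℕ} [NeZero k] (h : a < 2*k) :
    ((a : Fin k)).val = if a < k then a else a - k := by
  rw [Fin.val_natCast]
  split
  · exact Nat.mod_eq_of_lt ‹_›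
  · rw [Nat.mod_eq_sub_mod (by omega), Nat.mod_eq_of_lt (by omega)]

/-- rotated-normalised non-rainbow tuples with minimal colour-repeat distance `d` -/
def GoodD (l d : ℕ) : Set (Fin (2*l+1) → V) :=
  {x ∈ Cyc G (2*l+1) | 2 ≤ d ∧ d ≤ l ∧ Ec c x 0 = Ec c x d ∧
    ∀ s t : ℕ, 1 ≤ s → s < t → t ≤ d → Ec c x s ≠ Ec c x t}

lemma goodd_same (l d : ℕ) (hl : 2 ≤ l) (hd2 : 2 ≤ d) (hdl : d ≤ l)
    (hc : ProperColoring G c) {x x' : Fin (2*l+1) → V}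
    (hx : x ∈ GoodD G c l d) (hx' : x' ∈ GoodD G c l d)
    (hsame : ∀ j : ℕ, j < 2*l+1 → j ≠ d → x (j : Fin (2*l+1)) = x' (j : Fin (2*l+1))) :
    x = x' := by
  obtain ⟨hxC, -, -, hcol0, -⟩ := hx
  obtain ⟨hx'C, -, -, hcol0', -⟩ := hx'
  have hrec : x ((d : ℕ) : Fin (2*l+1)) = x' ((d : ℕ) : Fin (2*l+1)) := by
    have hd1k : d + 1 < 2*l+1 := by omega
    have hA1 : G.Adj (x ((d+1 : ℕ) : Fin (2*l+1))) (x ((d : ℕ) : Fin (2*l+1))) := by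
      have := hxC.2 ((d : ℕ) : Fin (2*l+1))
      rw [← cast_succ_eq] at this
      exact this.symm
    have hA2 : G.Adj (x ((d+1 : ℕ) : Fin (2*l+1))) (x' ((d : ℕ) : Fin (2*l+1))) := by
      have := hx'C.2 ((d : ℕ) : Fin (2*l+1))
      rw [← cast_succ_eq] at this
      rw [hsame (d+1) hd1k (by omega)]
      exact this.symm
    refine proper_unique G c hc hA1 hA2 ?_
    have e1 : c s(x ((d+1:ℕ) : Fin (2*l+1)), x ((d:ℕ) : Fin (2*l+1))) = Ec c x d := by
      rw [Sym2.eq_swap, Ec_def, cast_succ_eq]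
    have e2 : c s(x ((d+1:ℕ) : Fin (2*l+1)), x' ((d:ℕ) : Fin (2*l+1))) = Ec c x' d := by
      rw [hsame (d+1) hd1k (by omega), Sym2.eq_swap, Ec_def, cast_succ_eq]
    rw [e1, e2, ← hcol0, ← hcol0', Ec_def, Ec_def, ← cast_succ_eq,
      hsame 0 (by omega) (by omega), hsame (0+1) (by omega) (by omega)]
  funext j
  rcases eq_or_ne j.val d with hjd | hjd
  · have := hrec
    rwa [show ((d : ℕ) : Fin (2*l+1)) = j by rw [← hjd, Fin.cast_val_eq_self]] at this
  · have := hsame j.val j.isLt hjd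
    rwa [Fin.cast_val_eq_self] at this

lemma light_bound (l d : ℕ) (hl : 2 ≤ l) (hd2 : 2 ≤ d) (hdl : d ≤ l)
    (hc : ProperColoring G c) (Θ : ℕ) :
    {x ∈ GoodD G c l d |
        (PathS G (2*l+1-d) (x ((d+1 : ℕ) : Fin (2*l+1))) (x ((1:ℕ) : Fin (2*l+1)))).ncard ≤ Θ}.ncard
      ≤ (Fintype.card V)^2 * Θ * (Fintype.card V)^(d-2) := by
  classical
  set k := 2*l+1 with hk
  set m := 2*l+1-d with hm
  set n := Fintype.card V with hn
  have hm2 : 2 ≤ m := by omega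
  set LightSP : Set (Fin (m+1) → V) :=
    {S | S ∈ PathS G m (S 0) (S (m : Fin (m+1))) ∧
      (PathS G m (S 0) (S (m : Fin (m+1)))).ncard ≤ Θ} with hLSP
  have hLcard : LightSP.ncard ≤ n^2 * Θ := by
    have hfb := tool_fiber_bound LightSP (fun S => (S 0, S (m : Fin (m+1)))) Θ ?_
    · refine hfb.trans (le_of_eq ?_)
      rw [Fintype.card_prod, hn]; ring
    · rintro ⟨a, b⟩
      by_cases hab : (PathS G m a b).ncard ≤ Θ
      · refine le_trans (Set.ncard_le_ncard ?_ (Set.toFinite _)) hab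
        rintro S ⟨⟨hS1, hS2⟩, hS3⟩
        simp only [Set.mem_preimage, Set.mem_singleton_iff, Prod.mk.injEq] at hS3
        rwa [← hS3.1, ← hS3.2]
      · have hemp : LightSP ∩ (fun S => (S 0, S (m : Fin (m+1)))) ⁻¹' {(a, b)} = ∅ := by
          ext S
          simp only [Set.mem_inter_iff, Set.mem_preimage, Set.mem_singleton_iff,
            Set.mem_empty_iff_false, iff_false, Prod.mk.injEq, hLSP, Set.mem_setOf_eq]
          rintro ⟨⟨hS1, hS2⟩, hS3, hS4⟩
          rw [hS3, hS4] at hS2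
          exact hab hS2
        rw [hemp]; simp
  refine le_trans (Set.ncard_le_ncard_of_injOn
    (fun x : Fin k → V => ((fun i : Fin (m+1) => x ((d+1+(i:ℕ) : ℕ) : Fin k)),
               (fun i : Fin (d-2) => x ((2+(i:ℕ) : ℕ) : Fin k))))
    (t := LightSP ×ˢ (Set.univ : Set (Fin (d-2) → V)))
    ?_ ?_ (Set.toFinite (LightSP ×ˢ (Set.univ : Set (Fin (d-2) → V))))) ?_
  · -- maps to
    rintro x ⟨⟨hxC, -, -, hcol0, hdist⟩, hlight⟩
    refine Set.mem_prod.mpr ⟨?_, Set.mem_univ _⟩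
    set S : Fin (m+1) → V := fun i : Fin (m+1) => x ((d+1+(i:ℕ) : ℕ) : Fin k) with hS
    have hSval : ∀ i : ℕ, i ≤ m → S (i : Fin (m+1)) = x ((d+1+i : ℕ) : Fin k) := by
      intro i hi
      show x _ = x _
      congr 2
      rw [Fin.val_natCast, Nat.mod_eq_of_lt (by omega)]
    have hS0 : S 0 = x ((d+1 : ℕ) : Fin k) := by
      have h00 := hSval 0 (by omega)
      rwa [show ((0:ℕ) : Fin (m+1)) = 0 by simp, show d+1+0 = d+1 by omega] at h00
    have hSm : S (m : Fin (m+1)) = x ((1:ℕ) : Fin k) := by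
      rw [hSval m (le_refl m)]
      congr 1
      ext
      rw [val_cast_big (by omega), val_cast_big (by omega)]
      rw [if_neg (show ¬ (d+1+m < k) by omega), if_pos (by omega)]
      omega
    have hSP : S ∈ PathS G m (S 0) (S (m : Fin (m+1))) := by
      refine ⟨?_, ?_, rfl, rfl⟩
      · intro i1 i2 hEq
        have h1 := hSval i1.val (by omega)
        have h2 := hSval i2.val (by omega)
        rw [Fin.cast_val_eq_self] at h1 h2
        rw [h1, h2] at hEq
        have hfin := hxC.1 hEq
        have hv := congrArg Fin.val hfin
        rw [val_cast_big (by omega), val_cast_big (by omega)] at hv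
        have : i1.val = i2.val := by
          have b1 := i1.isLt; have b2 := i2.isLt
          split_ifs at hv <;> omega
        exact Fin.ext this
      · intro i hi
        have e1 : S ((i : ℕ) : Fin (m+1)) = x ((d+1+i : ℕ) : Fin k) := hSval i (by omega)
        have e2 : S (((i : ℕ) : Fin (m+1)) + 1) = x ((d+1+(i+1) : ℕ) : Fin k) := by
          rw [← cast_succ_eq]; exact hSval (i+1) (by omega)
        rw [e1, e2, show d+1+(i+1) = (d+1+i)+1 by omega, cast_succ_eq]
        exact hxC.2 _
    show S ∈ LightSP
    exact ⟨hSP, by rw [hS0, hSm]; exact hlight⟩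
  · -- injective on
    rintro x ⟨hxG, hxl⟩ x' ⟨hx'G, hx'l⟩ hEq
    simp only [Prod.mk.injEq] at hEq
    obtain ⟨hEqS, hEqT⟩ := hEq
    have hsame : ∀ j : ℕ, j < k → j ≠ d → x (j : Fin k) = x' (j : Fin k) := by
      intro j hjk hjd
      rcases lt_or_ge j 2 with hj2 | hj2
      · -- j = 0 or 1 : from S at positions m-1, m
        rcases (show j = 0 ∨ j = 1 by omega) with rfl | rfl
        · have := congrFun hEqS ⟨m-1, by omega⟩
          simp only at this
          have hidx : ((d+1+((⟨m-1, by omega⟩ : Fin (m+1)) : ℕ) : ℕ) : Fin k) = ((0:ℕ) : Fin k) := by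
            ext
            rw [val_cast_big (by omega), val_cast_big (by omega)]
            simp only
            rw [if_neg (show ¬ (d+1+(m-1) < k) by omega), if_pos (by omega)]
            omega
          rwa [hidx] at this
        · have := congrFun hEqS ⟨m, by omega⟩
          simp only at this
          have hidx : ((d+1+((⟨m, by omega⟩ : Fin (m+1)) : ℕ) : ℕ) : Fin k) = ((1:ℕ) : Fin k) := by
            ext
            rw [val_cast_big (by omega), val_cast_big (by omega)]
            simp only
            rw [if_neg (show ¬ (d+1+m < k) by omega), if_pos (by omega)]
            omega
          rwa [hidx] at this
      · rcases lt_or_ge j (d+1) with hjd1 | hjd1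
        · -- 2 ≤ j ≤ d-1 : stored
          have := congrFun hEqT ⟨j-2, by omega⟩
          simp only at this
          rwa [show 2+(j-2) = j by omega] at this
        · -- d+1 ≤ j ≤ k-1 : from S
          have := congrFun hEqS ⟨j-(d+1), by omega⟩
          simp only at this
          rwa [show d+1+(j-(d+1)) = j by omega] at this
    exact goodd_same G c l d hl hd2 hdl hc hxG hx'G hsame
  · -- cardinality of target
    rw [tool_ncard_prod]
    have h1 : (Set.univ : Set (Fin (d-2) → V)).ncard = n^(d-2) := by
      rw [Set.ncard_univ, Nat.card_eq_fintype_card, Fintype.card_fun, Fintype.card_fin, hn]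
    rw [h1]
    exact Nat.mul_le_mul_right _ hLcard

end MainA
section MainB
variable {V : Type} [Fintype V] {γT : Type} (G : SimpleGraph V) (c : Sym2 V → γT)

lemma goodd_same0 (l d : ℕ) (hl : 2 ≤ l) (hd2 : 2 ≤ d) (hdl : d ≤ l)
    (hc : ProperColoring G c) {x x' : Fin (2*l+1) → V}
    (hx : x ∈ GoodD G c l d) (hx' : x' ∈ GoodD G c l d)
    (hsame : ∀ j : ℕ, j < 2*l+1 → j ≠ 0 → x (j : Fin (2*l+1)) = x' (j : Fin (2*l+1))) :
    x = x' := by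
  obtain ⟨hxC, -, -, hcol0, -⟩ := hx
  obtain ⟨hx'C, -, -, hcol0', -⟩ := hx'
  have hrec : x ((0 : ℕ) : Fin (2*l+1)) = x' ((0 : ℕ) : Fin (2*l+1)) := by
    have hA1 : G.Adj (x ((0+1 : ℕ) : Fin (2*l+1))) (x ((0:ℕ) : Fin (2*l+1))) := by
      have := hxC.2 ((0 : ℕ) : Fin (2*l+1))
      rw [← cast_succ_eq] at this
      exact this.symm
    have hA2 : G.Adj (x ((0+1 : ℕ) : Fin (2*l+1))) (x' ((0:ℕ) : Fin (2*l+1))) := by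
      have := hx'C.2 ((0 : ℕ) : Fin (2*l+1))
      rw [← cast_succ_eq] at this
      rw [hsame (0+1) (by omega) (by omega)]
      exact this.symm
    refine proper_unique G c hc hA1 hA2 ?_
    have e1 : c s(x ((0+1:ℕ) : Fin (2*l+1)), x ((0:ℕ) : Fin (2*l+1))) = Ec c x 0 := by
      rw [Sym2.eq_swap, Ec_def, cast_succ_eq]
    have e2 : c s(x ((0+1:ℕ) : Fin (2*l+1)), x' ((0:ℕ) : Fin (2*l+1))) = Ec c x' 0 := by
      rw [hsame (0+1) (by omega) (by omega), Sym2.eq_swap, Ec_def, cast_succ_eq]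
    rw [e1, e2, hcol0, hcol0', Ec_def, Ec_def, ← cast_succ_eq,
      hsame d (by omega) (by omega), hsame (d+1) (by omega) (by omega)]
  funext j
  rcases eq_or_ne j.val 0 with hjd | hjd
  · have := hrec
    rwa [show ((0 : ℕ) : Fin (2*l+1)) = j by ext; simp [hjd]] at this
  · have := hsame j.val j.isLt hjd
    rwa [Fin.cast_val_eq_self] at this

lemma fiber_inj (l d : ℕ) (hl : 2 ≤ l) (hd2 : 2 ≤ d) (hdl : d ≤ l)
    (hc : ProperColoring G c) (u w : V) :
    {x ∈ GoodD G c l d | x ((1:ℕ) : Fin (2*l+1)) = u ∧ x ((d+1:ℕ) : Fin (2*l+1)) = w}.ncard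
      ≤ (RbP G c d u w).ncard * (Fintype.card V)^(2*l+1-d-2) := by
  classical
  set k := 2*l+1 with hk
  set m := 2*l+1-d with hm
  set n := Fintype.card V with hn
  refine le_trans (Set.ncard_le_ncard_of_injOn
    (fun x : Fin k → V => ((fun i : Fin (d+1) => x ((1+(i:ℕ) : ℕ) : Fin k)),
               (fun i : Fin (m-2) => x ((d+2+(i:ℕ) : ℕ) : Fin k))))
    (t := RbP G c d u w ×ˢ (Set.univ : Set (Fin (m-2) → V)))
    ?_ ?_ (Set.toFinite _)) ?_
  · -- maps to
    rintro x ⟨⟨hxC, -, -, hcol0, hdist⟩, hu, hw⟩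
    refine Set.mem_prod.mpr ⟨?_, Set.mem_univ _⟩
    set P : Fin (d+1) → V := fun i : Fin (d+1) => x ((1+(i:ℕ) : ℕ) : Fin k) with hP
    have hPval : ∀ i : ℕ, i ≤ d → P (i : Fin (d+1)) = x ((1+i : ℕ) : Fin k) := by
      intro i hi
      show x _ = x _
      congr 2
      rw [Fin.val_natCast, Nat.mod_eq_of_lt (by omega)]
    have hPE : ∀ i : ℕ, i < d → Ec c P i = Ec c x (1+i) := by
      intro i hi
      rw [Ec_def, Ec_def, ← cast_succ_eq, ← cast_succ_eq, hPval i (by omega),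
        hPval (i+1) (by omega), show 1+(i+1) = (1+i)+1 by omega]
    have hPP : P ∈ PathS G d u w := by
      refine ⟨?_, ?_, ?_, ?_⟩
      · intro i1 i2 hEq
        have h1 := hPval i1.val (by omega)
        have h2 := hPval i2.val (by omega)
        rw [Fin.cast_val_eq_self] at h1 h2
        rw [h1, h2] at hEq
        have hfin := hxC.1 hEq
        have hv := congrArg Fin.val hfin
        rw [Fin.val_natCast, Fin.val_natCast, Nat.mod_eq_of_lt (by omega),
          Nat.mod_eq_of_lt (by omega)] at hv
        exact Fin.ext (by omega)
      · intro i hi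
        have e1 : P ((i : ℕ) : Fin (d+1)) = x ((1+i : ℕ) : Fin k) := hPval i (by omega)
        have e2 : P (((i : ℕ) : Fin (d+1)) + 1) = x ((1+(i+1) : ℕ) : Fin k) := by
          rw [← cast_succ_eq]; exact hPval (i+1) (by omega)
        rw [e1, e2, show 1+(i+1) = (1+i)+1 by omega, cast_succ_eq]
        exact hxC.2 _
      · have h00 := hPval 0 (by omega)
        rwa [show ((0:ℕ) : Fin (d+1)) = 0 by simp, show 1+0 = 1 by omega] at h00
      · rw [hPval d (le_refl d)]
        rwa [show 1+d = d+1 by omega]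
    refine ⟨hPP, ?_⟩
    intro i j hij hj
    rw [hPE i (by omega), hPE j (by omega)]
    exact hdist (1+i) (1+j) (by omega) (by omega) (by omega)
  · -- inj on
    rintro x ⟨hxG, hxu, hxw⟩ x' ⟨hx'G, hx'u, hx'w⟩ hEq
    simp only [Prod.mk.injEq] at hEq
    obtain ⟨hEqP, hEqT⟩ := hEq
    have hsame : ∀ j : ℕ, j < k → j ≠ 0 → x (j : Fin k) = x' (j : Fin k) := by
      intro j hjk hj0
      rcases lt_or_ge j (d+2) with hjd | hjd
      · -- 1 ≤ j ≤ d+1 : from P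
        have := congrFun hEqP ⟨j-1, by omega⟩
        simp only at this
        rwa [show 1+(j-1) = j by omega] at this
      · -- d+2 ≤ j : stored
        have := congrFun hEqT ⟨j-(d+2), by omega⟩
        simp only at this
        rwa [show d+2+(j-(d+2)) = j by omega] at this
    exact goodd_same0 G c l d hl hd2 hdl hc hxG hx'G hsame
  · rw [tool_ncard_prod]
    have h1 : (Set.univ : Set (Fin (m-2) → V)).ncard = n^(m-2) := by
      rw [Set.ncard_univ, Nat.card_eq_fintype_card, Fintype.card_fun, Fintype.card_fin, hn]
    rw [h1]

lemma rainbow_lower' (k d m : ℕ) (hkk : k = d + m) (hd : 2 ≤ d) (hm : 2 ≤ m) (u w : V)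
    (hc : ProperColoring G c) [NeZero k] :
    (RbP G c d u w).ncard *
      ((PathS G m w u).ncard - ((m+1)*(d+1) + m*d + m*m) * (Fintype.card V)^(m-2))
      ≤ {y ∈ RbCyc G c k | y 0 = u ∧ y ((d:ℕ) : Fin k) = w}.ncard := by
  subst hkk
  exact rainbow_lower G c hd hm u w hc

lemma goodD_bound (l d : ℕ) (hl : 2 ≤ l) (hc : ProperColoring G c) :
    (GoodD G c l d).ncard ≤
      24*(l*l+2*l+1) * (Fintype.card V)^(2*l-1) + (RbCyc G c (2*l+1)).ncard := by
  classical
  by_cases hd : 2 ≤ d ∧ d ≤ l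
  · obtain ⟨hd2, hdl⟩ := hd
    set k := 2*l+1 with hk
    set m := 2*l+1-d with hm
    set n := Fintype.card V with hn
    have hm2 : 2 ≤ m := by omega
    set Λ : ℕ := (m+1)*(d+1) + m*d + m*m with hΛ
    have hΛbound : Λ ≤ 12*(l*l+2*l+1) := by
      have hstep : Λ ≤ (m+d+1)*(m+d+1) := by rw [hΛ]; nlinarith
      have he1 : m+d+1 = 2*l+2 := by omega
      have he2 : (2*l+2)*(2*l+2) = 4*(l*l+2*l+1) := by ring
      rw [he1, he2] at hstep
      omega
    have hΛ1 : 1 ≤ Λ := by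
      rw [hΛ]
      have := Nat.mul_pos (show 0 < m by omega) (show 0 < m by omega)
      omega
    set Θ : ℕ := Λ * n^(m-2) * 2 with hΘ
    set tc : (Fin k → V) → ℕ :=
      fun x => (PathS G m (x ((d+1 : ℕ) : Fin k)) (x ((1:ℕ) : Fin k))).ncard with htc
    have hsplit : (GoodD G c l d).ncard ≤
        {x ∈ GoodD G c l d | tc x ≤ Θ}.ncard + {x ∈ GoodD G c l d | Θ < tc x}.ncard := by
      refine le_trans (Set.ncard_le_ncard ?_
        (Set.Finite.union (Set.toFinite _) (Set.toFinite _))) (Set.ncard_union_le _ _)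
      intro x hx
      rcases le_or_gt (tc x) Θ with h | h
      · exact Or.inl ⟨hx, h⟩
      · exact Or.inr ⟨hx, h⟩
    have hlight : {x ∈ GoodD G c l d | tc x ≤ Θ}.ncard ≤ 24*(l*l+2*l+1) * n^(2*l-1) := by
      refine le_trans (light_bound G c l d hl hd2 hdl hc Θ) ?_
      have hee : n^2 * Θ * n^(d-2) = 2*Λ * n^(2*l-1) := by
        rw [hΘ]
        have : n^2 * (Λ*n^(m-2)*2) * n^(d-2) = 2*Λ * (n^2 * n^(m-2) * n^(d-2)) := by ring
        rw [this, ← pow_add, ← pow_add]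
        congr 2
        omega
      rw [hee]
      have : 2*Λ ≤ 24*(l*l+2*l+1) := by omega
      exact Nat.mul_le_mul_right _ this
    have hheavy : {x ∈ GoodD G c l d | Θ < tc x}.ncard ≤ (RbCyc G c k).ncard := by
      set Hv := {x ∈ GoodD G c l d | Θ < tc x} with hHv
      set g : (Fin k → V) → V × V :=
        fun x => (x ((1:ℕ) : Fin k), x ((d+1 : ℕ) : Fin k)) with hg
      have hfib : ∀ uw : V × V, Λ * (Hv ∩ g ⁻¹' {uw}).ncard ≤
          {y ∈ RbCyc G c k | y 0 = uw.1 ∧ y ((d:ℕ) : Fin k) = uw.2}.ncard := by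
        rintro ⟨u, w⟩
        by_cases hne : (Hv ∩ g ⁻¹' {(u, w)}) = ∅
        · rw [hne]; simp
        · obtain ⟨x0, hx0⟩ := Set.nonempty_iff_ne_empty.mpr hne
          obtain ⟨⟨hx0G, hx0t⟩, hx0f⟩ := hx0
          simp only [Set.mem_preimage, Set.mem_singleton_iff, Prod.mk.injEq, hg] at hx0f
          have ht : Θ < (PathS G m w u).ncard := by
            rw [← hx0f.1, ← hx0f.2]; exact hx0t
          have hsub : Hv ∩ g ⁻¹' {(u, w)} ⊆
              {x ∈ GoodD G c l d | x ((1:ℕ) : Fin k) = u ∧ x ((d+1:ℕ) : Fin k) = w} := by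
            rintro x ⟨⟨hxG, -⟩, hxf⟩
            simp only [Set.mem_preimage, Set.mem_singleton_iff, Prod.mk.injEq, hg] at hxf
            exact ⟨hxG, hxf.1, hxf.2⟩
          have h1 : (Hv ∩ g ⁻¹' {(u, w)}).ncard ≤ (RbP G c d u w).ncard * n^(m-2) := by
            refine le_trans (Set.ncard_le_ncard hsub (Set.toFinite _)) ?_
            exact fiber_inj G c l d hl hd2 hdl hc u w
          calc Λ * (Hv ∩ g ⁻¹' {(u, w)}).ncard ≤ Λ * ((RbP G c d u w).ncard * n^(m-2)) :=
                Nat.mul_le_mul_left _ h1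
            _ = (RbP G c d u w).ncard * (Λ * n^(m-2)) := by ring
            _ ≤ (RbP G c d u w).ncard * ((PathS G m w u).ncard - Λ * n^(m-2)) := by
                refine Nat.mul_le_mul_left _ ?_
                omega
            _ ≤ _ := rainbow_lower' G c k d m (by omega) hd2 hm2 u w hc
      have hsum : Λ * Hv.ncard ≤ (RbCyc G c k).ncard := by
        rw [tool_fiber_sum Hv g, Finset.mul_sum]
        refine le_trans (Finset.sum_le_sum (fun uw _ => hfib uw)) ?_
        refine tool_sum_fiber_le (RbCyc G c k)
          (fun y => (y 0, y ((d:ℕ) : Fin k))) _ ?_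
        rintro ⟨u, w⟩ y ⟨hy1, hy2, hy3⟩
        exact ⟨hy1, by simp [hy2, hy3]⟩
      calc Hv.ncard ≤ Λ * Hv.ncard := Nat.le_mul_of_pos_left _ (by omega)
        _ ≤ _ := hsum
    calc (GoodD G c l d).ncard ≤ _ := hsplit
      _ ≤ 24*(l*l+2*l+1) * n^(2*l-1) + (RbCyc G c (2*l+1)).ncard := by
          exact add_le_add hlight hheavy
  · have : GoodD G c l d = ∅ := by
      ext x
      simp only [GoodD, Set.mem_setOf_eq, Set.mem_empty_iff_false, iff_false]
      rintro ⟨-, h1, h2, -⟩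
      exact hd ⟨h1, h2⟩
    rw [this]
    simp

end MainB
section MainC
variable {V : Type} [Fintype V] {γT : Type} (G : SimpleGraph V) (c : Sym2 V → γT)

lemma fin_add_ne (l : ℕ) (hl : 2 ≤ l) (t : ℕ) (h1 : 1 ≤ t) (h2 : t ≤ 2*l)
    (i : Fin (2*l+1)) : i + (t : Fin (2*l+1)) ≠ i := by
  intro h
  have ht0 : (t : Fin (2*l+1)) = 0 := by
    have := congrArg (fun z => z - i) h
    simpa [add_sub_cancel_right] using this
  have := congrArg Fin.val ht0
  rw [Fin.val_natCast, Nat.mod_eq_of_lt (by omega)] at this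
  simp at this
  omega

lemma extract (l : ℕ) (hl : 2 ≤ l) (hc : ProperColoring G c) {x : Fin (2*l+1) → V}
    (hxI : Function.Injective x) (hxA : ∀ i : Fin (2*l+1), G.Adj (x i) (x (i+1)))
    (hnr : ¬ Function.Injective (fun i : Fin (2*l+1) => c s(x i, x (i+1)))) :
    ∃ (m' : Fin (2*l+1)) (d : ℕ), (fun i => x (i + m')) ∈ GoodD G c l d := by
  classical
  set colF : Fin (2*l+1) → γT := fun i => c s(x i, x (i+1)) with hcolF
  obtain ⟨a, b, hab, hne⟩ := Function.not_injective_iff.mp hnr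
  have hex : ∃ δ : ℕ, 1 ≤ δ ∧ δ ≤ 2*l ∧ ∃ i : Fin (2*l+1),
      colF i = colF (i + (δ : Fin (2*l+1))) := by
    refine ⟨(b - a).val, ?_, ?_, a, ?_⟩
    · have hba : b - a ≠ 0 := fun h => hne ((sub_eq_zero.mp h).symm) |>.elim
      have : (b - a).val ≠ 0 := fun h => hba (Fin.ext (by simpa using h))
      omega
    · have := (b - a).isLt; omega
    · rw [Fin.cast_val_eq_self, add_comm, sub_add_cancel]
      exact hab
  set d := Nat.find hex with hdd
  obtain ⟨hd1, hd2l, i0, hwit⟩ := Nat.find_spec hex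
  have hmin : ∀ δ : ℕ, δ < d → ¬ (1 ≤ δ ∧ δ ≤ 2*l ∧ ∃ i : Fin (2*l+1),
      colF i = colF (i + (δ : Fin (2*l+1)))) := fun δ h => Nat.find_min hex h
  -- d ≥ 2
  have hd2 : 2 ≤ d := by
    rcases eq_or_lt_of_le hd1 with he | h
    · exfalso
      have hwit1 : colF i0 = colF (i0 + 1) := by
        rw [← he] at hwit
        rwa [Nat.cast_one] at hwit
      have hA1 : G.Adj (x i0) (x (i0 + 1)) := hxA i0
      have hA2 : G.Adj (x (i0 + 1)) (x (i0 + 1 + 1)) := hxA (i0 + 1)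
      have hne12 : s(x i0, x (i0+1)) ≠ s(x (i0+1), x (i0+1+1)) := by
        intro hEq
        rw [Sym2.eq_iff] at hEq
        rcases hEq with ⟨h3, -⟩ | ⟨h3, -⟩
        · have := hxI h3
          have h1 := fin_add_ne l hl 1 (by omega) (by omega) i0
          rw [Nat.cast_one] at h1
          exact h1 this.symm
        · have heq2 := hxI h3
          have h1 := fin_add_ne l hl 2 (by omega) (by omega) i0
          apply h1
          rw [show ((2:ℕ) : Fin (2*l+1)) = 1 + 1 by push_cast; ring, ← add_assoc]
          exact heq2.symm
      exact hc _ _ hA1 hA2 hne12 ⟨x (i0+1), by simp, by simp⟩ hwit1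
    · omega
  -- d ≤ l
  have hdl : d ≤ l := by
    by_contra hdg
    push_neg at hdg
    refine hmin (2*l+1-d) (by omega) ⟨by omega, by omega, i0 + (d : Fin (2*l+1)), ?_⟩
    have hz : ((d : ℕ) : Fin (2*l+1)) + ((2*l+1-d : ℕ) : Fin (2*l+1)) = 0 := by
      rw [← Nat.cast_add, show d + (2*l+1-d) = 2*l+1 by omega, Fin.natCast_self]
    rw [add_assoc, hz, add_zero]
    exact hwit.symm
  -- membership
  refine ⟨i0, d, ⟨?_, ?_⟩, hd2, hdl, ?_, ?_⟩
  · intro i1 i2 h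
    have := hxI h
    exact add_right_cancel this
  · intro i
    show G.Adj (x (i + i0)) (x (i + 1 + i0))
    rw [show i + 1 + i0 = (i + i0) + 1 by ring]
    exact hxA (i + i0)
  · show Ec c (fun i => x (i + i0)) 0 = Ec c (fun i => x (i + i0)) d
    rw [Ec_def, Ec_def]
    show c s(x (((0:ℕ) : Fin (2*l+1)) + i0), x ((((0:ℕ) : Fin (2*l+1)) + 1) + i0))
      = c s(x (((d:ℕ) : Fin (2*l+1)) + i0), x ((((d:ℕ) : Fin (2*l+1)) + 1) + i0))
    have e0 : colF (((0:ℕ) : Fin (2*l+1)) + i0) =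
        c s(x (((0:ℕ) : Fin (2*l+1)) + i0), x ((((0:ℕ) : Fin (2*l+1)) + 1) + i0)) := by
      rw [hcolF]
      congr 2
      ring
    have ed : colF (((d:ℕ) : Fin (2*l+1)) + i0) =
        c s(x (((d:ℕ) : Fin (2*l+1)) + i0), x ((((d:ℕ) : Fin (2*l+1)) + 1) + i0)) := by
      rw [hcolF]
      congr 2
      ring
    rw [← e0, ← ed, Nat.cast_zero, zero_add, add_comm]
    exact hwit
  · intro s t hs hst htd heq
    have hBs : Ec c (fun i => x (i + i0)) s = colF (((s:ℕ) : Fin (2*l+1)) + i0) := by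
      rw [Ec_def, hcolF]
      show c s(x (((s:ℕ) : Fin (2*l+1)) + i0), x ((((s:ℕ) : Fin (2*l+1)) + 1) + i0)) = _
      congr 2
      ring
    have hBt : Ec c (fun i => x (i + i0)) t = colF (((t:ℕ) : Fin (2*l+1)) + i0) := by
      rw [Ec_def, hcolF]
      show c s(x (((t:ℕ) : Fin (2*l+1)) + i0), x ((((t:ℕ) : Fin (2*l+1)) + 1) + i0)) = _
      congr 2
      ring
    rw [hBs, hBt] at heq
    refine hmin (t - s) (by omega) ⟨by omega, by omega, ((s:ℕ) : Fin (2*l+1)) + i0, ?_⟩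
    rw [show ((s:ℕ) : Fin (2*l+1)) + i0 + ((t-s : ℕ) : Fin (2*l+1))
      = (((s:ℕ) : Fin (2*l+1)) + ((t-s : ℕ) : Fin (2*l+1))) + i0 by ring,
      ← Nat.cast_add, show s + (t-s) = t by omega]
    exact heq

end MainC

open SimpleGraph in
theorem nonrainbow_odd_cycles_bound (l : ℕ) (hl : 2 ≤ l) :
    ∃ C : ℕ, ∀ (V : Type) [Fintype V] (G : SimpleGraph V) (γ : Type) (c : Sym2 V → γ),
      ProperColoring G c →
      {x : Fin (2 * l + 1) → V | Function.Injective x ∧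
          (∀ i, G.Adj (x i) (x (i + 1))) ∧
          ¬ Function.Injective (fun i => c s(x i, x (i + 1)))}.ncard
        ≤ C * (Fintype.card V ^ (2 * l - 1) +
            {x : Fin (2 * l + 1) → V | Function.Injective x ∧
              (∀ i, G.Adj (x i) (x (i + 1))) ∧
              Function.Injective (fun i => c s(x i, x (i + 1)))}.ncard) := by
  classical
  refine ⟨(2*l+1)^2 * (24*(l*l+2*l+1) + 1), ?_⟩
  intro V _ G γ c hc
  set n := Fintype.card V with hn
  set R := {x : Fin (2 * l + 1) → V | Function.Injective x ∧
              (∀ i, G.Adj (x i) (x (i + 1))) ∧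
              Function.Injective (fun i => c s(x i, x (i + 1)))}.ncard with hR
  have hRset : (RbCyc G c (2*l+1)).ncard = R := by
    rw [hR]
    congr 1
    ext y
    simp only [RbCyc, Cyc, Set.mem_setOf_eq]
    tauto
  have hcov : {x : Fin (2 * l + 1) → V | Function.Injective x ∧
          (∀ i, G.Adj (x i) (x (i + 1))) ∧
          ¬ Function.Injective (fun i => c s(x i, x (i + 1)))} ⊆
      ⋃ z : Fin (2*l+1) × Fin (2*l+1),
        {xx : Fin (2*l+1) → V | (fun i => xx (i + z.1)) ∈ GoodD G c l z.2.val} := by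
    rintro x ⟨h1, h2, h3⟩
    obtain ⟨m', d, hmem⟩ := extract G c l hl hc h1 h2 h3
    have hdl : d ≤ l := hmem.2.2.1
    simp only [Set.mem_iUnion]
    have hdF : d < 2*l+1 :=
      Nat.lt_succ_of_le (hdl.trans (Nat.le_mul_of_pos_left l (by norm_num)))
    refine ⟨(m', (⟨d, hdF⟩ : Fin (2*l+1))), ?_⟩
    exact hmem
  have step1 : {x : Fin (2 * l + 1) → V | Function.Injective x ∧
          (∀ i, G.Adj (x i) (x (i + 1))) ∧
          ¬ Function.Injective (fun i => c s(x i, x (i + 1)))}.ncard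
      ≤ ∑ z : Fin (2*l+1) × Fin (2*l+1), (GoodD G c l z.2.val).ncard := by
    refine le_trans (Set.ncard_le_ncard hcov (Set.toFinite _)) ?_
    refine le_trans (tool_iUnion_le _) ?_
    refine Finset.sum_le_sum (fun z _ => ?_)
    refine Set.ncard_le_ncard_of_injOn (fun xx => (fun i => xx (i + z.1))) ?_ ?_ (Set.toFinite _)
    · intro xx hxx; exact hxx
    · intro x1 _ x2 _ hEq
      funext j
      have := congrFun hEq (j - z.1)
      simpa [sub_add_cancel] using this
  have step2 : ∑ z : Fin (2*l+1) × Fin (2*l+1), (GoodD G c l z.2.val).ncard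
      ≤ (2*l+1)^2 * (24*(l*l+2*l+1) * n^(2*l-1) + R) := by
    calc ∑ z : Fin (2*l+1) × Fin (2*l+1), (GoodD G c l z.2.val).ncard
        ≤ ∑ _z : Fin (2*l+1) × Fin (2*l+1), (24*(l*l+2*l+1) * n^(2*l-1) + R) := by
          refine Finset.sum_le_sum (fun z _ => ?_)
          have := goodD_bound G c l z.2.val hl hc
          rwa [hRset] at this
      _ = (2*l+1)^2 * (24*(l*l+2*l+1) * n^(2*l-1) + R) := by
          rw [Finset.sum_const, smul_eq_mul, Finset.card_univ, Fintype.card_prod,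
            Fintype.card_fin]
          ring
  refine le_trans (le_trans step1 step2) ?_
  have hfinal : (2*l+1)^2 * (24*(l*l+2*l+1) * n^(2*l-1) + R)
      ≤ (2*l+1)^2 * (24*(l*l+2*l+1) + 1) * (n^(2*l-1) + R) := by
    set A := (2*l+1)^2
    set B := 24*(l*l+2*l+1)
    set E := n^(2*l-1)
    have hstep : B*E + R ≤ (B+1)*(E+R) := by nlinarith
    calc A * (B * E + R) ≤ A * ((B+1)*(E+R)) := Nat.mul_le_mul_left _ hstep
      _ = A * (B+1) * (E + R) := by ring
  exact hfinal
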